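/- arXiv:0906.4315 — 6 statements merged into one kernel-verified Lean document; each statement's English description precedes it below -/
import Mathlib

section
/- (Liveness part of the fairness-program lemma.) In any event structure satisfying the event-structure axioms, if clauses (ψ₃) and (ψ₄) of Fair-Pg(φ,t,l,a) hold and the strong communication-fairness condition FairSend(l) holds, then the liveness clause (φ₃) of the specification Fair(φ,t,l) holds: either some event has agent i and for every event e of agent i there is e' with agent(e') = i, e ⪯_i e', and ¬φ(stateAfter(e')); or no event has agent i and ¬φ(initstate_i); or some event has agent i and for every event e of agent i there is a receive event e' on l with e ⪯_i send(e'). -/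
/-- An event structure over agents `AG`, links `Links`, local actions `Act`,
values `Val` (with a distinguished null value `bot`), and local variables `X`
(where `mv l` is the variable `msg(l)` recording the message sent on link `l`).
Local states are assignments of values to variables, i.e. functions `X → Val`.
An event of kind `Sum.inl l` is a receive on link `l`; an event of kind
`Sum.inr a` is a local `a`-event.  The fields `lt i` are the local strict total
orders `≺ᵢ` on the events of agent `i`, and `send` assigns to each receive
event its corresponding send event.  The event-structure axioms are the
`lt_*` order axioms and the `rcv_*` axioms about receive events. -/
structure EventStructure (AG Links Act Val X : Type) (source dest : Links → AG)
    (bot : Val) (mv : Links → X) where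
  E : Type
  agent : E → AG
  kind : E → Links ⊕ Act
  val : E → Val
  stateBefore : E → X → Val
  stateAfter : E → X → Val
  initstate : AG → X → Val
  lt : AG → E → E → Prop
  send : E → E
  lt_irrefl : ∀ i e, ¬ lt i e e
  lt_trans : ∀ i e₁ e₂ e₃, lt i e₁ e₂ → lt i e₂ e₃ → lt i e₁ e₃
  lt_total : ∀ i e e', agent e = i → agent e' = i → lt i e e' ∨ e = e' ∨ lt i e' e
  rcv_agent : ∀ e l, kind e = Sum.inl l → agent e = dest l
  rcv_send_agent : ∀ e l, kind e = Sum.inl l → agent (send e) = source l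
  rcv_val : ∀ e l, kind e = Sum.inl l → val e = stateAfter (send e) (mv l)
  rcv_val_ne : ∀ e l, kind e = Sum.inl l → val e ≠ bot

namespace EventStructure

variable {AG Links Act Val X : Type} {source dest : Links → AG} {bot : Val}
  {mv : Links → X}

/-- `e ⪯ᵢ e'`: the reflexive closure of the local order `≺ᵢ`. -/
def locLe (es : EventStructure AG Links Act Val X source dest bot mv) (i : AG)
    (e e' : es.E) : Prop :=
  es.lt i e e' ∨ e = e'

/-- Clause (ψ₁) of `Fair-Pg(φ,t,l,a)`: only `a`-events of agent `i` set `msg(l)`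
to a non-null value. -/
def psi1 (es : EventStructure AG Links Act Val X source dest bot mv)
    (i : AG) (l : Links) (a : Act) : Prop :=
  ∀ e, es.agent e = i → es.stateAfter e (mv l) ≠ bot → es.kind e = Sum.inr a

/-- Clause (ψ₂): agent `i` performs action `a` only if the precondition `phi`
holds of its local state. -/
def psi2 (es : EventStructure AG Links Act Val X source dest bot mv)
    (i : AG) (a : Act) (phi : (X → Val) → Prop) : Prop :=
  ∀ e, es.agent e = i → es.kind e = Sum.inr a → phi (es.stateBefore e)

/-- Clause (ψ₃): the effect of an `a`-event of agent `i` is to set `msg(l)` to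
the term `t` evaluated at the state before the event. -/
def psi3 (es : EventStructure AG Links Act Val X source dest bot mv)
    (i : AG) (l : Links) (a : Act) (t : (X → Val) → Val) : Prop :=
  ∀ e, es.agent e = i → es.kind e = Sum.inr a →
    es.stateAfter e (mv l) = t (es.stateBefore e)

/-- Clause (ψ₄), the weak-fairness clause. -/
def psi4 (es : EventStructure AG Links Act Val X source dest bot mv)
    (i : AG) (a : Act) (phi : (X → Val) → Prop) : Prop :=
  ((∃ e, es.agent e = i) ∧
    ∀ e, es.agent e = i → ∃ e', es.agent e' = i ∧ es.locLe i e e' ∧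
      (¬ phi (es.stateAfter e') ∨ es.kind e' = Sum.inr a)) ∨
  ((¬ ∃ e, es.agent e = i) ∧ ¬ phi (es.initstate i))

/-- The strong communication-fairness condition `FairSend(l)`, where
`i = source l`. -/
def FairSend (es : EventStructure AG Links Act Val X source dest bot mv)
    (i : AG) (l : Links) : Prop :=
  (∀ e, es.agent e = i → ∃ e', es.agent e' = i ∧ es.locLe i e e' ∧
      es.stateAfter e' (mv l) ≠ bot) →
  ∀ e, es.agent e = i → ∃ e', es.kind e' = Sum.inl l ∧ es.locLe i e (es.send e')

/-- Clause (φ₁) of the specification `Fair(φ,t,l)`: the precondition held at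
the sender's state when any message received on `l` was sent. -/
def phi1spec (es : EventStructure AG Links Act Val X source dest bot mv)
    (l : Links) (phi : (X → Val) → Prop) : Prop :=
  ∀ e', es.kind e' = Sum.inl l → phi (es.stateBefore (es.send e'))

/-- Clause (φ₂): every message received on `l` is `t` evaluated at the sender's
state at the time of sending. -/
def phi2spec (es : EventStructure AG Links Act Val X source dest bot mv)
    (l : Links) (t : (X → Val) → Val) : Prop :=
  ∀ e', es.kind e' = Sum.inl l → es.val e' = t (es.stateBefore (es.send e'))

/-- Clause (φ₃), the liveness clause of `Fair(φ,t,l)`, where `i = source l`. -/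
def phi3spec (es : EventStructure AG Links Act Val X source dest bot mv)
    (i : AG) (l : Links) (phi : (X → Val) → Prop) : Prop :=
  ((∃ e, es.agent e = i) ∧
    ∀ e, es.agent e = i → ∃ e', es.agent e' = i ∧ es.locLe i e e' ∧
      ¬ phi (es.stateAfter e')) ∨
  ((¬ ∃ e, es.agent e = i) ∧ ¬ phi (es.initstate i)) ∨
  ((∃ e, es.agent e = i) ∧
    ∀ e, es.agent e = i → ∃ e', es.kind e' = Sum.inl l ∧ es.locLe i e (es.send e'))

/-- The specification `Fair(φ,t,l)`: conjunction of (φ₁), (φ₂), (φ₃). -/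
def FairSpec (es : EventStructure AG Links Act Val X source dest bot mv)
    (i : AG) (l : Links) (phi : (X → Val) → Prop) (t : (X → Val) → Val) : Prop :=
  es.phi1spec l phi ∧ es.phi2spec l t ∧ es.phi3spec i l phi

end EventStructure

/-- Liveness part of the fairness-program lemma: in any event structure
satisfying the event-structure axioms, clauses (ψ₃) and (ψ₄) of
`Fair-Pg(φ,t,l,a)` together with the strong communication-fairness condition
`FairSend(l)` imply the liveness clause (φ₃) of the specification
`Fair(φ,t,l)`. -/
theorem fair_pg_liveness
    {AG Links Act Val X : Type} {source dest : Links → AG} {bot : Val}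
    {mv : Links → X}
    (es : EventStructure AG Links Act Val X source dest bot mv)
    (i j : AG) (hij : i ≠ j) (l : Links) (hsrc : source l = i)
    (hdest : dest l = j) (a : Act)
    (phi : (X → Val) → Prop) (t : (X → Val) → Val) (ht : ∀ s, t s ≠ bot)
    (h3 : es.psi3 i l a t) (h4 : es.psi4 i a phi)
    (hfs : es.FairSend i l) :
    es.phi3spec i l phi := by
  rcases h4 with ⟨hex, h4⟩ | ⟨hne, hni⟩
  · by_cases hall : ∀ e, es.agent e = i → ∃ e', es.agent e' = i ∧
        es.locLe i e e' ∧ es.kind e' = Sum.inr a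
    · -- every event is followed by an a-event; use FairSend
      refine Or.inr (Or.inr ⟨hex, ?_⟩)
      apply hfs
      intro e he
      obtain ⟨e', he', hle, hk⟩ := hall e he
      exact ⟨e', he', hle, by rw [h3 e' he' hk]; exact ht _⟩
    · push_neg at hall
      obtain ⟨e0, he0, h0⟩ := hall
      refine Or.inl ⟨hex, ?_⟩
      intro e he
      -- take the max of e and e0
      have hcases := es.lt_total i e e0 he he0
      have key : ∀ e₁, es.agent e₁ = i → es.locLe i e0 e₁ →
          ∃ e', es.agent e' = i ∧ es.locLe i e₁ e' ∧ ¬ phi (es.stateAfter e') := by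
        intro e₁ h₁ hle₀
        obtain ⟨e', he', hle, hd⟩ := h4 e₁ h₁
        refine ⟨e', he', hle, ?_⟩
        rcases hd with hnp | hk
        · exact hnp
        · exfalso
          apply h0 e' he' ?_ hk
          rcases hle₀ with h | h <;> rcases hle with h' | h'
          · exact Or.inl (es.lt_trans i _ _ _ h h')
          · exact Or.inl (h' ▸ h)
          · exact Or.inl (h ▸ h')
          · exact Or.inr (h.trans h')
      rcases hcases with h | h | h
      · obtain ⟨e', he', hle, hnp⟩ := key e0 he0 (Or.inr rfl)
        refine ⟨e', he', ?_, hnp⟩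
        rcases hle with h' | h'
        · exact Or.inl (es.lt_trans i _ _ _ h h')
        · exact Or.inl (h' ▸ h)
      · exact key e he (Or.inr h.symm)
      · exact key e he (Or.inl h)
  · exact Or.inr (Or.inl ⟨hne, hni⟩)
end

section
/- (The fairness program satisfies the fairness specification.) In any event structure satisfying the event-structure axioms, if all four clauses (ψ₁), (ψ₂), (ψ₃), (ψ₄) of Fair-Pg(φ,t,l,a) hold and the strong communication-fairness condition FairSend(l) holds, then the specification Fair(φ,t,l) holds, i.e., all three clauses (φ₁), (φ₂), (φ₃) hold. -/
/-- The fairness program satisfies the fairness specification: in any event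
structure satisfying the event-structure axioms, if all four clauses
(ψ₁)–(ψ₄) of `Fair-Pg(φ,t,l,a)` hold and `FairSend(l)` holds, then the
specification `Fair(φ,t,l)`, i.e. the conjunction of (φ₁), (φ₂), (φ₃),
holds. -/
theorem fair_pg_satisfies_fair_spec
    {AG Links Act Val X : Type} {source dest : Links → AG} {bot : Val}
    {mv : Links → X}
    (es : EventStructure AG Links Act Val X source dest bot mv)
    (i j : AG) (hij : i ≠ j) (l : Links) (hsrc : source l = i)
    (hdest : dest l = j) (a : Act)
    (phi : (X → Val) → Prop) (t : (X → Val) → Val) (ht : ∀ s, t s ≠ bot)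
    (h1 : es.psi1 i l a) (h2 : es.psi2 i a phi)
    (h3 : es.psi3 i l a t) (h4 : es.psi4 i a phi)
    (hfs : es.FairSend i l) :
    es.FairSpec i l phi t := by
  have hle_trans : ∀ e₁ e₂ e₃, es.locLe i e₁ e₂ → es.locLe i e₂ e₃ →
      es.locLe i e₁ e₃ := by
    rintro e₁ e₂ e₃ (h | rfl) (h' | rfl)
    · exact Or.inl (es.lt_trans i _ _ _ h h')
    · exact Or.inl h
    · exact Or.inl h'
    · exact Or.inr rfl
  -- every send on l is an a-event
  have hsend_a : ∀ e', es.kind e' = Sum.inl l → es.kind (es.send e') = Sum.inr a := by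
    intro e' hk
    have hag : es.agent (es.send e') = i := by rw [es.rcv_send_agent e' l hk, hsrc]
    have hne : es.stateAfter (es.send e') (mv l) ≠ bot := by
      rw [← es.rcv_val e' l hk]; exact es.rcv_val_ne e' l hk
    exact h1 _ hag hne
  have hsend_agent : ∀ e', es.kind e' = Sum.inl l → es.agent (es.send e') = i := by
    intro e' hk; rw [es.rcv_send_agent e' l hk, hsrc]
  refine ⟨?_, ?_, ?_⟩
  · intro e' hk
    exact h2 _ (hsend_agent e' hk) (hsend_a e' hk)
  · intro e' hk
    rw [es.rcv_val e' l hk]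
    exact h3 _ (hsend_agent e' hk) (hsend_a e' hk)
  · rcases h4 with ⟨hex, h4⟩ | ⟨hne, hinit⟩
    · by_cases hfirst : ∀ e, es.agent e = i → ∃ e', es.agent e' = i ∧
          es.locLe i e e' ∧ ¬ phi (es.stateAfter e')
      · exact Or.inl ⟨hex, hfirst⟩
      · push_neg at hfirst
        obtain ⟨e₀, he₀, hstab⟩ := hfirst
        -- all e' ⪰ e₀ of agent i satisfy phi (stateAfter e')
        have hstab' : ∀ e', es.agent e' = i → es.locLe i e₀ e' →
            phi (es.stateAfter e') := by
          intro e' ha hle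
          exact hstab e' ha hle
        refine Or.inr (Or.inr ⟨hex, hfs ?_⟩)
        intro e he
        -- take m ⪰ both e and e₀
        obtain ⟨m, hm, hme, hme₀⟩ : ∃ m, es.agent m = i ∧ es.locLe i e m ∧
            es.locLe i e₀ m := by
          rcases es.lt_total i e e₀ he he₀ with h | h | h
          · exact ⟨e₀, he₀, Or.inl h, Or.inr rfl⟩
          · exact ⟨e₀, he₀, Or.inr h, Or.inr rfl⟩
          · exact ⟨e, he, Or.inr rfl, Or.inl h⟩
        obtain ⟨e', ha', hle', hor⟩ := h4 m hm
        have hphi : phi (es.stateAfter e') :=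
          hstab' e' ha' (hle_trans _ _ _ hme₀ hle')
        have hka : es.kind e' = Sum.inr a := by
          rcases hor with h | h
          · exact absurd hphi h
          · exact h
        refine ⟨e', ha', hle_trans _ _ _ hme hle', ?_⟩
        rw [h3 e' ha' hka]
        exact ht _
    · exact Or.inr (Or.inl ⟨hne, hinit⟩)
end

section
/- (Composition of two fairness programs satisfies both fairness specifications.) Let l and l' be distinct links with source(l) = i and source(l') = i', let a and a' be distinct local actions, let φ be a predicate on S_i and φ' a predicate on S_{i'}, and let t : S_i → Val and t' : S_{i'} → Val with t(s) ≠ ⊥ and t'(s') ≠ ⊥ for all s, s'. In any event structure satisfying the event-structure axioms, if the four clauses (ψ₁)–(ψ₄) of Fair-Pg(φ,t,l,a) hold (with agent i, link l, action a), the four clauses (ψ₁)–(ψ₄) of Fair-Pg(φ',t',l',a') hold (with agent i', link l', action a'), and both FairSend(l) and FairSend(l') hold, then both specifications Fair(φ,t,l) and Fair(φ',t',l') hold. -/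
theorem EventStructure.locLe_trans
    {AG Links Act Val X : Type} {source dest : Links → AG} {bot : Val}
    {mv : Links → X}
    (es : EventStructure AG Links Act Val X source dest bot mv)
    {i : AG} {e₁ e₂ e₃ : es.E} (h : es.locLe i e₁ e₂) (h' : es.locLe i e₂ e₃) :
    es.locLe i e₁ e₃ := by
  rcases h with h | rfl
  · rcases h' with h' | rfl
    · exact Or.inl (es.lt_trans i _ _ _ h h')
    · exact Or.inl h
  · exact h'

theorem EventStructure.fair_one
    {AG Links Act Val X : Type} {source dest : Links → AG} {bot : Val}
    {mv : Links → X}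
    (es : EventStructure AG Links Act Val X source dest bot mv)
    (i : AG) (l : Links) (hsrc : source l = i) (a : Act)
    (phi : (X → Val) → Prop) (t : (X → Val) → Val) (ht : ∀ s, t s ≠ bot)
    (h1 : es.psi1 i l a) (h2 : es.psi2 i a phi)
    (h3 : es.psi3 i l a t) (h4 : es.psi4 i a phi)
    (hfs : es.FairSend i l) : es.FairSpec i l phi t := by
  have hsendA : ∀ e', es.kind e' = Sum.inl l → es.kind (es.send e') = Sum.inr a := by
    intro e' hk
    have hag : es.agent (es.send e') = i := by rw [es.rcv_send_agent e' l hk, hsrc]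
    have hne : es.stateAfter (es.send e') (mv l) ≠ bot := by
      rw [← es.rcv_val e' l hk]; exact es.rcv_val_ne e' l hk
    exact h1 _ hag hne
  have hsendAg : ∀ e', es.kind e' = Sum.inl l → es.agent (es.send e') = i := by
    intro e' hk; rw [es.rcv_send_agent e' l hk, hsrc]
  refine ⟨fun e' hk => h2 _ (hsendAg e' hk) (hsendA e' hk), fun e' hk => ?_, ?_⟩
  · rw [es.rcv_val e' l hk]
    exact h3 _ (hsendAg e' hk) (hsendA e' hk)
  · rcases h4 with ⟨hex, h4⟩ | hno
    · by_cases hall : ∀ e, es.agent e = i → ∃ e', es.agent e' = i ∧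
        es.locLe i e e' ∧ ¬ phi (es.stateAfter e')
      · exact Or.inl ⟨hex, hall⟩
      · push_neg at hall
        obtain ⟨e₀, he₀, hstab⟩ := hall
        refine Or.inr (Or.inr ⟨hex, hfs ?_⟩)
        intro e he
        -- find m ≥ e, e₀
        obtain ⟨m, hm, hem, he₀m⟩ : ∃ m, es.agent m = i ∧ es.locLe i e m ∧
            es.locLe i e₀ m := by
          rcases es.lt_total i e e₀ he he₀ with h | h | h
          · exact ⟨e₀, he₀, Or.inl h, Or.inr rfl⟩
          · exact ⟨e, he, Or.inr rfl, Or.inr h.symm⟩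
          · exact ⟨e, he, Or.inr rfl, Or.inl h⟩
        obtain ⟨e', he', hme', hcase⟩ := h4 m hm
        refine ⟨e', he', es.locLe_trans hem hme', ?_⟩
        rcases hcase with hnphi | hka
        · exact absurd (hstab e' he' (es.locLe_trans he₀m hme')) hnphi
        · rw [h3 e' he' hka]; exact ht _
    · exact Or.inr (Or.inl hno)

/-- Composition of two fairness programs satisfies both fairness
specifications: for distinct links `l, l'` (with sources `i, i'`) and distinct
actions `a, a'`, if the clauses (ψ₁)–(ψ₄) of `Fair-Pg(φ,t,l,a)` and of
`Fair-Pg(φ',t',l',a')` all hold in an event structure satisfying the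
event-structure axioms, and both `FairSend(l)` and `FairSend(l')` hold, then
both `Fair(φ,t,l)` and `Fair(φ',t',l')` hold. -/
theorem fair_pg_compose_satisfies_both
    {AG Links Act Val X : Type} {source dest : Links → AG} {bot : Val}
    {mv : Links → X}
    (es : EventStructure AG Links Act Val X source dest bot mv)
    (i i' : AG) (l l' : Links) (hll' : l ≠ l')
    (hsrc : source l = i) (hsrc' : source l' = i')
    (a a' : Act) (haa' : a ≠ a')
    (phi : (X → Val) → Prop) (phi' : (X → Val) → Prop)
    (t : (X → Val) → Val) (t' : (X → Val) → Val)
    (ht : ∀ s, t s ≠ bot) (ht' : ∀ s, t' s ≠ bot)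
    (h1 : es.psi1 i l a) (h2 : es.psi2 i a phi)
    (h3 : es.psi3 i l a t) (h4 : es.psi4 i a phi)
    (h1' : es.psi1 i' l' a') (h2' : es.psi2 i' a' phi')
    (h3' : es.psi3 i' l' a' t') (h4' : es.psi4 i' a' phi')
    (hfs : es.FairSend i l) (hfs' : es.FairSend i' l') :
    es.FairSpec i l phi t ∧ es.FairSpec i' l' phi' t' := by
  exact ⟨es.fair_one i l hsrc a phi t ht h1 h2 h3 h4 hfs,
    es.fair_one i' l' hsrc' a' phi' t' ht' h1' h2' h3' h4' hfs'⟩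
end

section
/- (Consistency of the fairness program.) Fix agents i ≠ j, a link l with source(l) = i and dest(l) = j, a local action a, a predicate φ on S_i, and a map t : S_i → Val with t(s) ≠ ⊥ for all s. Then there exists an event structure satisfying the event-structure axioms in which all four clauses (ψ₁), (ψ₂), (ψ₃), (ψ₄) of Fair-Pg(φ,t,l,a) hold. (If ¬φ(s*) for some local state s* of i, an empty event structure with initstate_i = s* suffices; otherwise an infinite event structure in which i repeatedly performs action a, sending t on l, and j repeatedly receives on l suffices.) -/
/-- Consistency of the fairness program: there exists an event structure
satisfying the event-structure axioms in which all four clauses (ψ₁)–(ψ₄) of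
`Fair-Pg(φ,t,l,a)` hold. -/
theorem fair_pg_consistent
    (AG Links Act Val X : Type) (source dest : Links → AG) (bot : Val)
    (mv : Links → X)
    (i j : AG) (hij : i ≠ j) (l : Links) (hsrc : source l = i)
    (hdest : dest l = j) (a : Act)
    (phi : (X → Val) → Prop) (t : (X → Val) → Val) (ht : ∀ s, t s ≠ bot) :
    ∃ es : EventStructure AG Links Act Val X source dest bot mv,
      es.psi1 i l a ∧ es.psi2 i a phi ∧ es.psi3 i l a t ∧ es.psi4 i a phi := by
  by_cases h : ∃ s : X → Val, ¬ phi s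
  · obtain ⟨s, hs⟩ := h
    refine ⟨{ E := Empty, agent := Empty.elim, kind := Empty.elim,
              val := Empty.elim, stateBefore := Empty.elim, stateAfter := Empty.elim,
              initstate := fun _ => s, lt := fun _ e => e.elim, send := Empty.elim,
              lt_irrefl := fun _ e => e.elim, lt_trans := fun _ e => e.elim,
              lt_total := fun _ e => e.elim, rcv_agent := fun e => e.elim,
              rcv_send_agent := fun e => e.elim, rcv_val := fun e => e.elim,
              rcv_val_ne := fun e => e.elim }, ?_, ?_, ?_, ?_⟩
    · exact fun e => e.elim
    · exact fun e => e.elim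
    · exact fun e => e.elim
    · exact Or.inr ⟨fun ⟨e, _⟩ => e.elim, hs⟩
  · push_neg at h
    set s0 : X → Val := fun _ => bot with hs0
    refine ⟨{ E := ℕ ⊕ ℕ,
              agent := Sum.elim (fun _ => i) (fun _ => j),
              kind := Sum.elim (fun _ => Sum.inr a) (fun _ => Sum.inl l),
              val := fun _ => t s0,
              stateBefore := fun _ => s0,
              stateAfter := Sum.elim (fun _ _ => t s0) (fun _ => s0),
              initstate := fun _ => s0,
              lt := fun _ e e' => Sum.elim id id e < Sum.elim id id e',
              send := fun _ => Sum.inl 0,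
              lt_irrefl := fun _ e => lt_irrefl _,
              lt_trans := fun _ _ _ _ => lt_trans,
              lt_total := ?_,
              rcv_agent := ?_, rcv_send_agent := ?_, rcv_val := ?_,
              rcv_val_ne := ?_ }, ?_, ?_, ?_, ?_⟩
    · rintro k (n | n) (m | m) he he' <;> simp_all <;> omega
    · rintro (n | n) l' hk <;> simp_all
    · rintro (n | n) l' hk <;> simp_all
    · rintro (n | n) l' hk <;> simp_all
    · rintro (n | n) l' hk <;> simp_all [ht]
    · rintro (n | n) hag hne <;> simp_all
    · rintro (n | n) hag hk <;> simp_all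
    · rintro (n | n) hag hk <;> simp_all
    · refine Or.inl ⟨⟨Sum.inl 0, rfl⟩, ?_⟩
      rintro (n | n) hag
      · exact ⟨Sum.inl n, rfl, Or.inr rfl, Or.inr rfl⟩
      · exact absurd hag (Ne.symm hij)
end

section
/- (Consistency of the composition of two fairness programs.) Let l and l' be distinct links with source(l) = i, dest(l) = j, source(l') = i', dest(l') = j', let a and a' be distinct local actions, let φ be a predicate on S_i, φ' a predicate on S_{i'}, and let t : S_i → Val and t' : S_{i'} → Val with t(s) ≠ ⊥ and t'(s') ≠ ⊥ for all s, s'. Then there exists an event structure satisfying the event-structure axioms in which all four clauses (ψ₁)–(ψ₄) of Fair-Pg(φ,t,l,a) hold (with agent i, link l, action a) and all four clauses (ψ₁)–(ψ₄) of Fair-Pg(φ',t',l',a') hold (with agent i', link l', action a'). -/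
open Classical in
/-- Auxiliary: the case where `phi` is satisfiable but `phi'` is not. -/
theorem fair_pg_aux_single
    (AG Links Act Val X : Type) (source dest : Links → AG) (bot : Val)
    (mv : Links → X) (hmv : Function.Injective mv)
    (i i' : AG) (l l' : Links) (hll' : l ≠ l')
    (a a' : Act) (haa' : a ≠ a')
    (phi : (X → Val) → Prop) (phi' : (X → Val) → Prop)
    (t : (X → Val) → Val) (t' : (X → Val) → Val)
    (ht : ∀ s, t s ≠ bot)
    (hp : ∃ s : X → Val, phi s) (hp' : ¬ ∃ s : X → Val, phi' s) :
    ∃ es : EventStructure AG Links Act Val X source dest bot mv,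
      (es.psi1 i l a ∧ es.psi2 i a phi ∧ es.psi3 i l a t ∧ es.psi4 i a phi) ∧
      (es.psi1 i' l' a' ∧ es.psi2 i' a' phi' ∧ es.psi3 i' l' a' t' ∧
        es.psi4 i' a' phi') := by
  obtain ⟨s1, hs1⟩ := hp
  have hml : mv l' ≠ mv l := fun h => hll' ((hmv h).symm)
  refine ⟨{
    E := ℕ
    agent := fun _ => i
    kind := fun _ => Sum.inr a
    val := fun _ => bot
    stateBefore := fun _ => s1
    stateAfter := fun _ x => if x = mv l then t s1 else bot
    initstate := fun _ _ => bot
    lt := fun _ m n => m < n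
    send := id
    lt_irrefl := fun _ e => Nat.lt_irrefl e
    lt_trans := fun _ _ _ _ => Nat.lt_trans
    lt_total := fun _ e e' _ _ => by omega
    rcv_agent := fun e l0 h => by simp at h
    rcv_send_agent := fun e l0 h => by simp at h
    rcv_val := fun e l0 h => by simp at h
    rcv_val_ne := fun e l0 h => by simp at h
  }, ⟨?_, ?_, ?_, ?_⟩, ⟨?_, ?_, ?_, ?_⟩⟩
  · intro e _ _; rfl
  · intro e _ _; exact hs1
  · intro e _ _; simp
  · exact Or.inl ⟨⟨0, rfl⟩, fun e _ => ⟨e, rfl, Or.inr rfl, Or.inr rfl⟩⟩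
  · intro e _ hne; exact absurd (if_neg hml) hne
  · intro e _ hk; exact absurd (Sum.inr.inj hk) haa'
  · intro e _ hk; exact absurd (Sum.inr.inj hk) haa'
  · by_cases he : ∃ e : ℕ, i = i'
    · exact Or.inl ⟨he, fun e hei => ⟨e, hei, Or.inr rfl,
        Or.inl fun h => hp' ⟨_, h⟩⟩⟩
    · exact Or.inr ⟨he, fun h => hp' ⟨_, h⟩⟩

open Classical in
/-- Consistency of the composition of two fairness programs: for distinct
links `l, l'` and distinct actions `a, a'`, there exists an event structure
satisfying the event-structure axioms in which all four clauses (ψ₁)–(ψ₄) of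
`Fair-Pg(φ,t,l,a)` and all four clauses of `Fair-Pg(φ',t',l',a')` hold.
(Distinct links have distinct message variables: `mv` is injective.) -/
theorem fair_pg_compose_consistent
    (AG Links Act Val X : Type) (source dest : Links → AG) (bot : Val)
    (mv : Links → X) (hmv : Function.Injective mv)
    (i j i' j' : AG) (l l' : Links) (hll' : l ≠ l')
    (hsrc : source l = i) (hdest : dest l = j)
    (hsrc' : source l' = i') (hdest' : dest l' = j')
    (a a' : Act) (haa' : a ≠ a')
    (phi : (X → Val) → Prop) (phi' : (X → Val) → Prop)
    (t : (X → Val) → Val) (t' : (X → Val) → Val)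
    (ht : ∀ s, t s ≠ bot) (ht' : ∀ s, t' s ≠ bot) :
    ∃ es : EventStructure AG Links Act Val X source dest bot mv,
      (es.psi1 i l a ∧ es.psi2 i a phi ∧ es.psi3 i l a t ∧ es.psi4 i a phi) ∧
      (es.psi1 i' l' a' ∧ es.psi2 i' a' phi' ∧ es.psi3 i' l' a' t' ∧
        es.psi4 i' a' phi') := by
  have hml : mv l' ≠ mv l := fun h => hll' ((hmv h).symm)
  by_cases hp : ∃ s : X → Val, phi s
  · by_cases hp' : ∃ s : X → Val, phi' s
    · obtain ⟨s1, hs1⟩ := hp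
      obtain ⟨s2, hs2⟩ := hp'
      refine ⟨{
        E := ℕ
        agent := fun n => if Even n then i else i'
        kind := fun n => if Even n then Sum.inr a else Sum.inr a'
        val := fun _ => bot
        stateBefore := fun n => if Even n then s1 else s2
        stateAfter := fun n x => if Even n then (if x = mv l then t s1 else bot)
          else (if x = mv l' then t' s2 else bot)
        initstate := fun _ _ => bot
        lt := fun _ m n => m < n
        send := id
        lt_irrefl := fun _ e => Nat.lt_irrefl e
        lt_trans := fun _ _ _ _ => Nat.lt_trans
        lt_total := fun _ e e' _ _ => by omega
        rcv_agent := fun e l0 h => by by_cases he : Even e <;> simp [he] at h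
        rcv_send_agent := fun e l0 h => by by_cases he : Even e <;> simp [he] at h
        rcv_val := fun e l0 h => by by_cases he : Even e <;> simp [he] at h
        rcv_val_ne := fun e l0 h => by by_cases he : Even e <;> simp [he] at h
      }, ⟨?_, ?_, ?_, ?_⟩, ⟨?_, ?_, ?_, ?_⟩⟩
      · intro e _ hne
        by_cases he : Even e
        · simp [he]
        · exact absurd (by simp [he, hml.symm]) hne
      · intro e _ hk
        by_cases he : Even e
        · simpa [he] using hs1
        · simp [he] at hk; exact absurd hk.symm haa'
      · intro e _ hk
        by_cases he : Even e
        · simp [he]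
        · simp [he] at hk; exact absurd hk.symm haa'
      · refine Or.inl ⟨⟨0, by simp⟩, fun e _ => ⟨2 * e + 2, ?_, Or.inl (by omega), ?_⟩⟩
        · simp [Nat.even_add, Nat.even_mul]
        · exact Or.inr (by simp [Nat.even_add, Nat.even_mul])
      · intro e _ hne
        by_cases he : Even e
        · exact absurd (by simp [he, hml]) hne
        · simp [he]
      · intro e _ hk
        by_cases he : Even e
        · simp [he] at hk; exact absurd hk haa'
        · simpa [he] using hs2
      · intro e _ hk
        by_cases he : Even e
        · simp [he] at hk; exact absurd hk haa'
        · simp [he]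
      · refine Or.inl ⟨⟨1, by simp⟩, fun e _ => ⟨2 * e + 1, ?_, Or.inl (by omega), ?_⟩⟩
        · simp [Nat.even_add, Nat.even_mul]
        · exact Or.inr (by simp [Nat.even_add, Nat.even_mul])
    · exact fair_pg_aux_single AG Links Act Val X source dest bot mv hmv
        i i' l l' hll' a a' haa' phi phi' t t' ht hp hp'
  · by_cases hp' : ∃ s : X → Val, phi' s
    · obtain ⟨es, h1, h2⟩ := fair_pg_aux_single AG Links Act Val X source dest bot mv
        hmv i' i l' l hll'.symm a' a haa'.symm phi' phi t' t ht' hp' hp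
      exact ⟨es, h2, h1⟩
    · refine ⟨{
        E := Empty
        agent := Empty.elim
        kind := Empty.elim
        val := Empty.elim
        stateBefore := Empty.elim
        stateAfter := Empty.elim
        initstate := fun _ _ => bot
        lt := fun _ e _ => e.elim
        send := id
        lt_irrefl := fun _ e => e.elim
        lt_trans := fun _ e _ _ => e.elim
        lt_total := fun _ e _ _ _ => e.elim
        rcv_agent := fun e => e.elim
        rcv_send_agent := fun e => e.elim
        rcv_val := fun e => e.elim
        rcv_val_ne := fun e => e.elim
      }, ⟨fun e => e.elim, fun e => e.elim, fun e => e.elim,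
          Or.inr ⟨fun ⟨e, _⟩ => e.elim, fun h => hp ⟨_, h⟩⟩⟩,
         ⟨fun e => e.elim, fun e => e.elim, fun e => e.elim,
          Or.inr ⟨fun ⟨e, _⟩ => e.elim, fun h => hp' ⟨_, h⟩⟩⟩⟩
end

section
/- (Sender–receiver induction underlying the STP refinement theorem.) Let P_S, P_R : ℕ → ℕ → Prop, where P_S(n, m) is read as 'the sender knows that the receiver knows bit n at time m' and P_R(n, m) as 'the receiver knows bit n at time m'. Assume: (stability) for all n, m ≤ m', P_S(n, m) → P_S(n, m') and P_R(n, m) → P_R(n, m'); (transfer) for all n, m, P_S(n, m) → ∃ m' ≥ m, P_R(n, m'); (receiver-to-sender fairness) for all m, n, if P_R(k, m) holds for all k < n and ¬P_R(n, m), then there exists m' ≥ m such that either P_S(k, m') holds for all k < n, or P_R(n, m'); (sender-to-receiver fairness) for all m, n, if P_S(k, m) holds for all k < n and ¬P_S(n, m), then there exists m' ≥ m such that P_R(n, m') or P_S(n, m'). Then for every n there exists m with P_R(n, m); that is, the receiver eventually knows every bit. -/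
/-- Sender–receiver induction underlying the STP refinement theorem.
`PS n m` reads "the sender knows that the receiver knows bit `n` at time `m`"
and `PR n m` reads "the receiver knows bit `n` at time `m`".  Under stability,
transfer, and the two fairness conditions, the receiver eventually knows every
bit. -/
theorem stp_sender_receiver_induction (PS PR : ℕ → ℕ → Prop)
    (hPSstable : ∀ n m m', m ≤ m' → PS n m → PS n m')
    (hPRstable : ∀ n m m', m ≤ m' → PR n m → PR n m')
    (htransfer : ∀ n m, PS n m → ∃ m', m ≤ m' ∧ PR n m')
    (hRS : ∀ m n, (∀ k < n, PR k m) → ¬ PR n m →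
      ∃ m', m ≤ m' ∧ ((∀ k < n, PS k m') ∨ PR n m'))
    (hSR : ∀ m n, (∀ k < n, PS k m) → ¬ PS n m →
      ∃ m', m ≤ m' ∧ (PR n m' ∨ PS n m')) :
    ∀ n, ∃ m, PR n m := by
  have key : ∀ n, ∃ m, ∀ k < n, PR k m := by
    intro n
    induction n with
    | zero => exact ⟨0, fun k hk => absurd hk (Nat.not_lt_zero k)⟩
    | succ n ih =>
      obtain ⟨m, hm⟩ := ih
      -- it suffices to find m' ≥ m with PR n m'
      have step : ∃ m', m ≤ m' ∧ PR n m' := by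
        by_cases h : PR n m
        · exact ⟨m, le_rfl, h⟩
        · obtain ⟨m1, hm1, hcase⟩ := hRS m n hm h
          rcases hcase with hS | hR
          · -- all k < n have PS at m1
            by_cases hs : PS n m1
            · obtain ⟨m2, hm2, hr⟩ := htransfer n m1 hs
              exact ⟨m2, le_trans hm1 hm2, hr⟩
            · obtain ⟨m2, hm2, hcase2⟩ := hSR m1 n hS hs
              rcases hcase2 with hr | hs2
              · exact ⟨m2, le_trans hm1 hm2, hr⟩
              · obtain ⟨m3, hm3, hr⟩ := htransfer n m2 hs2
                exact ⟨m3, le_trans hm1 (le_trans hm2 hm3), hr⟩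
          · exact ⟨m1, hm1, hR⟩
      obtain ⟨m', hmm', hr⟩ := step
      refine ⟨m', fun k hk => ?_⟩
      rcases Nat.lt_succ_iff_lt_or_eq.mp hk with hk' | rfl
      · exact hPRstable k m m' hmm' (hm k hk')
      · exact hr
  intro n
  obtain ⟨m, hm⟩ := key (n + 1)
  exact ⟨m, hm n (Nat.lt_succ_self n)⟩
end
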